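/- Fix an integer j ≥ 3. As r → ∞, H_{j+1}^{(r)} − r^{j−1}/j! = O(r^{j−2}); that is, the function r ↦ H_{j+1}^{(r)} − r^{j−1}/j! is big-O of r ↦ r^{j−2} along the filter atTop. -/

import Mathlib

open Filter Asymptotics

/-- `convFib r m` is the convolved Fibonacci number `F_{m+1}^{(r)}`, the coefficient of
`z^m` in `(1 - z - z^2)^{-r}`, given by `∑_{j_1+⋯+j_r=m} F_{j_1+1}⋯F_{j_r+1}`. -/
def convFib (r m : ℕ) : ℕ :=
  ∑ t ∈ Finset.Nat.antidiagonalTuple r m, ∏ i, Nat.fib (t i + 1)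

/-- The convoluted convolved Fibonacci numbers:
`Gfib r m = G_{m+1}^{(r)} = (1/r) ∑_{d ∣ gcd(r,m)} μ(d) F_{m/d+1}^{(r/d)}`. -/
noncomputable def Gfib (r m : ℕ) : ℚ :=
  (1 / (r : ℚ)) * ∑ d ∈ (Nat.gcd r m).divisors,
    ((ArithmeticFunction.moebius d : ℤ) : ℚ) * convFib (r / d) (m / d)

/-- The sign twisted convoluted convolved Fibonacci numbers:
`Hfib r m = H_{m+1}^{(r)} = ((-1)^r/r) ∑_{d ∣ gcd(r,m)} μ(d) (-1)^{r/d} F_{m/d+1}^{(r/d)}`. -/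
noncomputable def Hfib (r m : ℕ) : ℚ :=
  ((-1 : ℚ) ^ r / (r : ℚ)) * ∑ d ∈ (Nat.gcd r m).divisors,
    ((ArithmeticFunction.moebius d : ℤ) : ℚ) * (-1 : ℚ) ^ (r / d) * convFib (r / d) (m / d)

lemma convFib_zero_left (m : ℕ) : convFib 0 m = if m = 0 then 1 else 0 := by
  cases m with
  | zero => simp [convFib, Finset.Nat.antidiagonalTuple_zero_zero]
  | succ n => simp [convFib, Finset.Nat.antidiagonalTuple_zero_succ]

lemma convFib_one_left (m : ℕ) : convFib 1 m = Nat.fib (m + 1) := by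
  simp [convFib, Finset.Nat.antidiagonalTuple_one]

lemma convFib_succ (r m : ℕ) :
    convFib (r+1) m = ∑ p ∈ Finset.HasAntidiagonal.antidiagonal m, Nat.fib (p.1+1) * convFib r p.2 := by
  unfold convFib
  simp_rw [Finset.mul_sum]
  rw [Finset.sum_sigma']
  refine Finset.sum_nbij' (fun t => ⟨(t 0, ∑ i, Fin.tail t i), Fin.tail t⟩)
    (fun x => Fin.cons x.1.1 x.2) ?_ ?_ ?_ ?_ ?_
  · intro t ht
    rw [Finset.Nat.mem_antidiagonalTuple] at ht
    simp only [Finset.mem_sigma, Finset.HasAntidiagonal.mem_antidiagonal, Finset.Nat.mem_antidiagonalTuple]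
    refine ⟨?_, trivial⟩
    rw [← ht, Fin.sum_univ_succ]
    rfl
  · intro x hx
    simp only [Finset.mem_sigma, Finset.HasAntidiagonal.mem_antidiagonal,
      Finset.Nat.mem_antidiagonalTuple] at hx ⊢
    rw [Fin.sum_univ_succ, Fin.cons_zero]
    simp only [Fin.cons_succ]
    rw [hx.2, hx.1]
  · intro t ht
    exact Fin.cons_self_tail t
  · intro x hx
    simp only [Finset.mem_sigma, Finset.HasAntidiagonal.mem_antidiagonal,
      Finset.Nat.mem_antidiagonalTuple] at hx
    obtain ⟨⟨a, b⟩, s⟩ := x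
    simp only at hx ⊢
    simp [Fin.tail_cons, Fin.cons_zero, hx.2]
  · intro t ht
    rw [Fin.prod_univ_succ]
    rfl

noncomputable def Fq : PowerSeries ℚ := PowerSeries.mk fun n => (Nat.fib (n+1) : ℚ)

lemma coeff_Fq_pow (r : ℕ) : ∀ m : ℕ, (PowerSeries.coeff (R := ℚ) m) (Fq ^ r) = (convFib r m : ℚ) := by
  induction r with
  | zero =>
    intro m
    rw [pow_zero, PowerSeries.coeff_one, convFib_zero_left]
    split <;> simp
  | succ r ih =>
    intro m
    rw [pow_succ, mul_comm, PowerSeries.coeff_mul, convFib_succ]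
    push_cast
    refine Finset.sum_congr rfl fun p _ => ?_
    rw [ih p.2]
    simp [Fq]

lemma Fq_eq : Fq = 1 + (PowerSeries.X + PowerSeries.X ^ 2) * Fq := by
  ext n
  have hzero : ∀ φ : PowerSeries ℚ, (PowerSeries.coeff (R := ℚ) 0) (PowerSeries.X * φ) = 0 := by
    intro φ
    rw [PowerSeries.coeff_zero_eq_constantCoeff, map_mul, PowerSeries.constantCoeff_X, zero_mul]
  have hX2 : ∀ φ : PowerSeries ℚ, (PowerSeries.X ^ 2 : PowerSeries ℚ) * φ =
      PowerSeries.X * (PowerSeries.X * φ) := by intro φ; ring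
  rw [add_mul, hX2]
  simp only [map_add, PowerSeries.coeff_one]
  match n with
  | 0 => simp [hzero, Fq]
  | 1 =>
    rw [PowerSeries.coeff_succ_X_mul, PowerSeries.coeff_succ_X_mul, hzero]
    simp [Fq]
  | (k+2) =>
    rw [PowerSeries.coeff_succ_X_mul, PowerSeries.coeff_succ_X_mul,
      PowerSeries.coeff_succ_X_mul]
    simp only [Fq, PowerSeries.coeff_mk, if_neg (Nat.succ_ne_zero _)]
    rw [Nat.fib_add_two]
    push_cast
    ring

lemma convFib_rec (r j : ℕ) :
    convFib (r+1) (j+2) = convFib r (j+2) + convFib (r+1) (j+1) + convFib (r+1) j := by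
  have h1 : Fq ^ (r+1) = Fq ^ r + (PowerSeries.X + PowerSeries.X ^ 2) * Fq ^ (r+1) := by
    calc Fq ^ (r+1) = Fq ^ r * Fq := pow_succ _ _
    _ = Fq ^ r * (1 + (PowerSeries.X + PowerSeries.X ^ 2) * Fq) := by rw [← Fq_eq]
    _ = Fq ^ r + (PowerSeries.X + PowerSeries.X ^ 2) * Fq ^ (r+1) := by rw [pow_succ]; ring
  have h2 := congrArg (PowerSeries.coeff (R := ℚ) (j+2)) h1
  have hX2 : ∀ φ : PowerSeries ℚ, (PowerSeries.X ^ 2 : PowerSeries ℚ) * φ =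
      PowerSeries.X * (PowerSeries.X * φ) := by intro φ; ring
  rw [map_add, add_mul, map_add, hX2, PowerSeries.coeff_succ_X_mul,
    PowerSeries.coeff_succ_X_mul, PowerSeries.coeff_succ_X_mul] at h2
  simp only [coeff_Fq_pow] at h2
  have h3 : ((convFib (r+1) (j+2) : ℕ) : ℚ) =
      ((convFib r (j+2) + convFib (r+1) (j+1) + convFib (r+1) j : ℕ) : ℚ) := by
    push_cast
    linarith [h2]
  exact_mod_cast h3

lemma convFib_zero_right (r : ℕ) : convFib r 0 = 1 := by
  simp [convFib, Finset.Nat.antidiagonalTuple_zero_right]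

def B (s j : ℕ) : ℕ := ∑ k ∈ Finset.range (j+1), k.choose (j-k) * (s+k).choose k

lemma B_zero_right (s : ℕ) : B s 0 = 1 := by simp [B]

lemma B_one_right (s : ℕ) : B s 1 = s + 1 := by
  simp [B, Finset.sum_range_succ]

lemma B_zero_left (m : ℕ) : B 0 m = Nat.fib (m + 1) := by
  rw [Nat.fib_succ_eq_sum_choose, Finset.Nat.sum_antidiagonal_eq_sum_range_succ_mk]
  simp [B]

lemma sum_pascal (g : ℕ → ℕ) (j : ℕ) :
    ∑ k ∈ Finset.range (j+3), k.choose (j+2-k) * g k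
      = ∑ k ∈ Finset.range (j+2), k.choose (j+1-k) * g (k+1)
        + ∑ k ∈ Finset.range (j+1), k.choose (j-k) * g (k+1) := by
  rw [Finset.sum_range_succ' _ (j+2)]
  have h0 : Nat.choose 0 (j+2-0) * g 0 = 0 := by
    simp [Nat.choose_zero_succ]
  rw [h0, add_zero]
  have hsub : ∀ k, j + 2 - (k+1) = j + 1 - k := fun k => by omega
  simp only [hsub]
  rw [Finset.sum_range_succ, Finset.sum_range_succ (fun k => k.choose (j+1-k) * g (k+1)) (j+1)]
  have htop : Nat.choose (j+2) (j+1-(j+1)) * g (j+2) = Nat.choose (j+1) (j+1-(j+1)) * g (j+2) := by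
    simp
  rw [htop, add_assoc, add_comm (Nat.choose (j+1) (j+1-(j+1)) * g (j+2)), ← add_assoc,
    ← Finset.sum_add_distrib]
  congr 1
  refine Finset.sum_congr rfl fun k hk => ?_
  rw [Finset.mem_range] at hk
  have h1 : j + 1 - k = (j - k) + 1 := by omega
  rw [h1, Nat.choose_succ_succ', ← h1]
  ring

lemma B_rec (s j : ℕ) : B (s+1) (j+2) = B s (j+2) + B (s+1) (j+1) + B (s+1) j := by
  have h1 : B (s+1) (j+2)
      = B s (j+2) + ∑ k ∈ Finset.range (j+3), k.choose (j+2-k) * (s+k).choose (k-1) := by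
    rw [B, B, ← Finset.sum_add_distrib]
    refine Finset.sum_congr rfl fun k _ => ?_
    cases k with
    | zero => simp
    | succ k =>
      have : (s+1+(k+1)).choose (k+1) = (s+(k+1)).choose (k+1) + (s+(k+1)).choose k := by
        have h2 : s+1+(k+1) = (s+(k+1)) + 1 := by omega
        rw [h2, Nat.choose_succ_succ']
        ring
      rw [this, Nat.succ_sub_one, Nat.mul_add]
  rw [h1, sum_pascal (fun k => (s+k).choose (k-1)) j]
  have hg : ∀ k : ℕ, (s+(k+1)).choose ((k+1)-1) = (s+1+k).choose k := by
    intro k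
    congr 1
    omega
  simp only [hg]
  simp only [B]
  ring

lemma convFib_one_right : ∀ r : ℕ, convFib r 1 = r := by
  intro r
  induction r with
  | zero => simp [convFib_zero_left]
  | succ r ih =>
    rw [convFib_succ, Finset.Nat.sum_antidiagonal_eq_sum_range_succ_mk]
    simp [Finset.sum_range_succ, ih, convFib_zero_right]

lemma convFib_eq_B : ∀ j s : ℕ, convFib (s+1) j = B s j := by
  intro j
  induction j using Nat.twoStepInduction with
  | zero => intro s; rw [B_zero_right, convFib_zero_right]
  | one => intro s; rw [B_one_right, convFib_one_right]
  | more j ih1 ih2 =>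
    intro s
    induction s with
    | zero => rw [convFib_one_left, B_zero_left]
    | succ s ihs =>
      rw [convFib_rec, ihs, ih2 (s+1), ih1 (s+1), B_rec]

lemma choose_le_two_pow' (n k : ℕ) : n.choose k ≤ 2 ^ n := by
  rcases le_or_gt k n with h | h
  · calc n.choose k ≤ ∑ i ∈ Finset.range (n+1), n.choose i :=
        Finset.single_le_sum (fun i _ => Nat.zero_le _) (Finset.mem_range.mpr (by omega))
    _ = 2 ^ n := Nat.sum_range_choose n
  · rw [Nat.choose_eq_zero_of_lt h]; exact Nat.zero_le _

lemma pow_add_le (r t m : ℕ) (hr : 1 ≤ r) :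
    (r + t) ^ m ≤ r ^ m + m * 2 ^ m * (t + 1) ^ m * r ^ (m - 1) := by
  rcases Nat.eq_zero_or_pos m with rfl | hm
  · simp
  rw [add_pow, Finset.sum_range_succ]
  simp only [Nat.choose_self, Nat.sub_self, pow_zero, mul_one, one_mul, Nat.cast_id]
  rw [add_comm (r ^ m)]
  refine Nat.add_le_add_right ?_ _
  calc ∑ k ∈ Finset.range m, r ^ k * t ^ (m - k) * (m.choose k)
      ≤ ∑ _k ∈ Finset.range m, r ^ (m-1) * (t+1) ^ m * 2 ^ m := by
        refine Finset.sum_le_sum fun k hk => ?_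
        rw [Finset.mem_range] at hk
        have h1 : r ^ k ≤ r ^ (m-1) := Nat.pow_le_pow_right hr (by omega)
        have h2 : t ^ (m-k) ≤ (t+1) ^ m :=
          le_trans (Nat.pow_le_pow_left (by omega) _) (Nat.pow_le_pow_right (by omega) (by omega))
        exact Nat.mul_le_mul (Nat.mul_le_mul h1 h2) (choose_le_two_pow' m k)
    _ = m * 2 ^ m * (t+1) ^ m * r ^ (m-1) := by
        rw [Finset.sum_const, Finset.card_range]
        ring
  
lemma convFib_le (s m : ℕ) : convFib (s+1) m ≤ (m+1) * 2 ^ m * (s+1+m) ^ m := by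
  rw [convFib_eq_B]
  calc B s m ≤ ∑ _k ∈ Finset.range (m+1), 2 ^ m * (s+1+m) ^ m := by
        refine Finset.sum_le_sum fun k hk => ?_
        rw [Finset.mem_range] at hk
        have h1 : k.choose (m-k) ≤ 2 ^ m :=
          le_trans (choose_le_two_pow' k (m-k)) (Nat.pow_le_pow_right (by omega) (by omega))
        have h2 : (s+k).choose k ≤ (s+1+m) ^ m :=
          le_trans (Nat.choose_le_pow _ _)
            (le_trans (Nat.pow_le_pow_left (by omega) _) (Nat.pow_le_pow_right (by omega) (by omega)))
        exact Nat.mul_le_mul h1 h2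
    _ = (m+1) * 2 ^ m * (s+1+m) ^ m := by
        rw [Finset.sum_const, Finset.card_range]
        ring

lemma N_low (s m : ℕ) : (s+1) ^ m ≤ m.factorial * convFib (s+1) m := by
  rw [convFib_eq_B]
  calc (s+1) ^ m ≤ (s+1).ascFactorial m := Nat.pow_succ_le_ascFactorial _ _
    _ = m.factorial * (s+m).choose m := Nat.ascFactorial_eq_factorial_mul_choose s m
    _ = m.factorial * (m.choose (m-m) * (s+m).choose m) := by simp
    _ ≤ m.factorial * B s m := by
        refine Nat.mul_le_mul_left _ ?_
        exact Finset.single_le_sum (f := fun k => k.choose (m-k) * (s+k).choose k)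
          (fun i _ => Nat.zero_le _) (Finset.mem_range.mpr (by omega))

lemma N_up (s m : ℕ) (hm : 1 ≤ m) (hsm : m ≤ s + 1) :
    m.factorial * convFib (s+1) m
      ≤ (s+1) ^ m + (m * 2 ^ m * m ^ m + m.factorial * m * 2 ^ m * 2 ^ (m-1)) * (s+1) ^ (m-1) := by
  rw [convFib_eq_B, B, Finset.sum_range_succ]
  simp only [Nat.sub_self, Nat.choose_zero_right, Nat.choose_self, one_mul, mul_one]
  rw [Nat.mul_add]
  have hasc : m.factorial * (s+m).choose m = (s+1).ascFactorial m :=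
    (Nat.ascFactorial_eq_factorial_mul_choose s m).symm
  rw [hasc]
  have h1 : (s+1).ascFactorial m ≤ (s+1)^m + m * 2^m * m^m * (s+1)^(m-1) := by
    calc (s+1).ascFactorial m ≤ (s+m)^m := Nat.ascFactorial_le_pow_add s m
      _ = ((s+1) + (m-1))^m := by congr 1; omega
      _ ≤ (s+1)^m + m * 2^m * ((m-1)+1)^m * (s+1)^(m-1) := pow_add_le _ _ _ (by omega)
      _ = (s+1)^m + m * 2^m * m^m * (s+1)^(m-1) := by rw [Nat.sub_add_cancel hm]
  have h2 : m.factorial * ∑ k ∈ Finset.range m, k.choose (m-k) * (s+k).choose k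
      ≤ m.factorial * m * 2^m * 2^(m-1) * (s+1)^(m-1) := by
    have hsum : ∑ k ∈ Finset.range m, k.choose (m-k) * (s+k).choose k
        ≤ m * (2^m * (2^(m-1) * (s+1)^(m-1))) := by
      calc ∑ k ∈ Finset.range m, k.choose (m-k) * (s+k).choose k
          ≤ ∑ _k ∈ Finset.range m, 2^m * (2^(m-1) * (s+1)^(m-1)) := by
            refine Finset.sum_le_sum fun k hk => ?_
            rw [Finset.mem_range] at hk
            have hb : k.choose (m-k) ≤ 2^m :=
              le_trans (choose_le_two_pow' _ _) (Nat.pow_le_pow_right (by omega) (by omega))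
            have hc : (s+k).choose k ≤ 2^(m-1) * (s+1)^(m-1) := by
              calc (s+k).choose k ≤ (s+k)^k := Nat.choose_le_pow _ _
                _ ≤ (2*(s+1))^(m-1) :=
                    le_trans (Nat.pow_le_pow_left (by omega) k)
                      (Nat.pow_le_pow_right (by omega) (by omega))
                _ = 2^(m-1) * (s+1)^(m-1) := Nat.mul_pow 2 (s+1) (m-1)
            exact Nat.mul_le_mul hb hc
        _ = m * (2^m * (2^(m-1) * (s+1)^(m-1))) := by
            rw [Finset.sum_const, Finset.card_range]; rfl
    calc m.factorial * ∑ k ∈ Finset.range m, k.choose (m-k) * (s+k).choose k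
        ≤ m.factorial * (m * (2^m * (2^(m-1) * (s+1)^(m-1)))) := Nat.mul_le_mul_left _ hsum
      _ = m.factorial * m * 2^m * 2^(m-1) * (s+1)^(m-1) := by ring
  refine le_trans (Nat.add_le_add h2 h1) (le_of_eq ?_)
  ring

lemma main_est (j s : ℕ) (hj2 : 2 ≤ j) (hsj : j ≤ s + 1) :
    |((convFib (s+1) j : ℚ)) / ((s+1:ℕ) : ℚ) - (((s+1:ℕ):ℚ))^(j-1) / (j.factorial : ℚ)|
      ≤ ((j * 2^j * j^j + j.factorial * j * 2^j * 2^(j-1) : ℕ) : ℚ) * (((s+1:ℕ):ℚ))^(j-2) := by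
  set R : ℚ := ((s+1:ℕ):ℚ) with hRdef
  have hR : (1:ℚ) ≤ R := by rw [hRdef]; exact_mod_cast Nat.succ_le_succ (Nat.zero_le s)
  have hR0 : (0:ℚ) < R := zero_lt_one.trans_le hR
  have hfac : (0:ℚ) < (j.factorial : ℚ) := by exact_mod_cast j.factorial_pos
  have hfac1 : (1:ℚ) ≤ (j.factorial : ℚ) := by exact_mod_cast j.factorial_pos
  set x : ℚ := (convFib (s+1) j : ℚ) with hxdef
  set K : ℚ := ((j * 2^j * j^j + j.factorial * j * 2^j * 2^(j-1) : ℕ) : ℚ) with hKdef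
  have hK0 : (0:ℚ) ≤ K := by rw [hKdef]; positivity
  have hlow : R^j ≤ (j.factorial:ℚ) * x := by
    rw [hRdef, hxdef]
    exact_mod_cast N_low s j
  have hup : (j.factorial:ℚ) * x ≤ R^j + K * R^(j-1) := by
    rw [hRdef, hxdef, hKdef]
    exact_mod_cast N_up s j (by omega) hsj
  have hpow1 : R^j = R^(j-1) * R := by rw [← pow_succ]; congr 1; omega
  have hpow2 : R^(j-1) = R^(j-2) * R := by rw [← pow_succ]; congr 1; omega
  have e1 : x / R - R^(j-1) / (j.factorial:ℚ)
      = ((j.factorial:ℚ) * x - R^j) / ((j.factorial:ℚ) * R) := by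
    rw [hpow1]
    field_simp
  rw [e1, abs_div, abs_of_pos (by positivity : (0:ℚ) < (j.factorial:ℚ) * R)]
  have hnum : |(j.factorial:ℚ) * x - R^j| ≤ K * R^(j-1) := by
    rw [abs_of_nonneg (by linarith)]
    linarith
  calc |(j.factorial:ℚ) * x - R^j| / ((j.factorial:ℚ)*R)
      ≤ (K * R^(j-1)) / ((j.factorial:ℚ)*R) := by gcongr
    _ ≤ (K * R^(j-1)) / (1*R) := by gcongr
    _ = K * R^(j-2) := by
        rw [one_mul, hpow2, ← mul_assoc, mul_div_assoc, div_self (ne_of_gt hR0), mul_one]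


lemma err_est (j r : ℕ) (hj : 3 ≤ j) (hjr : j + 1 ≤ r) :
    |Hfib r j - (convFib r j : ℚ) / (r:ℚ)|
      ≤ (j : ℚ) * ((((j+1) * 2^j * 2^(j-2) : ℕ) : ℚ) * (r:ℚ)^(j-2)) := by
  have hr0 : 0 < r := by omega
  have hrQ : (1:ℚ) ≤ (r:ℚ) := by exact_mod_cast hr0
  have hrQ0 : (0:ℚ) < (r:ℚ) := by exact_mod_cast hr0
  have hg : Nat.gcd r j ≠ 0 := by
    rw [Ne, Nat.gcd_eq_zero_iff]
    omega
  have h1mem : 1 ∈ (Nat.gcd r j).divisors := Nat.one_mem_divisors.mpr hg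
  set D := (Nat.gcd r j).divisors with hD
  set f : ℕ → ℚ := fun d =>
    ((ArithmeticFunction.moebius d : ℤ) : ℚ) * (-1:ℚ)^(r/d) * (convFib (r/d) (j/d) : ℚ) with hf
  have hsq : ((-1:ℚ)^r) * ((-1:ℚ)^r) = 1 := by rw [← mul_pow]; norm_num
  have hsplit : Hfib r j - (convFib r j : ℚ)/(r:ℚ)
      = ((-1:ℚ)^r/(r:ℚ)) * ∑ d ∈ D.erase 1, f d := by
    rw [Hfib, ← Finset.sum_erase_add D f h1mem]
    have hf1 : f 1 = (-1:ℚ)^r * (convFib r j : ℚ) := by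
      simp [hf, ArithmeticFunction.moebius_apply_one, Nat.div_one]
    rw [hf1, mul_add]
    have h2 : ((-1:ℚ)^r/(r:ℚ)) * ((-1:ℚ)^r * (convFib r j : ℚ)) = (convFib r j : ℚ)/(r:ℚ) := by
      rw [div_mul_eq_mul_div, ← mul_assoc, hsq, one_mul]
    rw [h2]
    ring
  set M : ℚ := (((j+1) * 2^j * 2^(j-2) : ℕ) : ℚ) with hM
  have hMbound : ∀ d ∈ D.erase 1, |f d| ≤ M * (r:ℚ)^(j-2) := by
    intro d hd
    obtain ⟨hd1, hdD⟩ := Finset.mem_erase.mp hd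
    have hddvd : d ∣ Nat.gcd r j := Nat.dvd_of_mem_divisors hdD
    have hdr : d ∣ r := hddvd.trans (Nat.gcd_dvd_left r j)
    have hdj : d ∣ j := hddvd.trans (Nat.gcd_dvd_right r j)
    have hd0 : 0 < d := Nat.pos_of_mem_divisors hdD
    have hd2 : 2 ≤ d := by omega
    have htm : j / d * d = j := Nat.div_mul_cancel hdj
    have hm2 : j / d ≤ j - 2 := by
      rcases (by omega : d = 2 ∨ 3 ≤ d) with h2 | h3
      · subst h2; omega
      · have h3m : 3 * (j/d) ≤ j := by
          calc 3 * (j/d) ≤ d * (j/d) := Nat.mul_le_mul_right _ h3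
            _ = j := by rw [mul_comm]; exact htm
        omega
    have ht1 : 1 ≤ r / d := (Nat.one_le_div_iff hd0).mpr (Nat.le_of_dvd hr0 hdr)
    have htr : r / d ≤ r := Nat.div_le_self r d
    have hcb : convFib (r/d) (j/d) ≤ ((j+1) * 2^j * 2^(j-2)) * r^(j-2) := by
      obtain ⟨u, hu⟩ : ∃ u, r / d = u + 1 := ⟨r/d - 1, by omega⟩
      rw [hu]
      calc convFib (u+1) (j/d) ≤ (j/d+1) * 2^(j/d) * (u+1+j/d)^(j/d) := convFib_le u (j/d)
        _ ≤ (j+1) * 2^j * (2*r)^(j-2) := by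
            have hmj : j / d ≤ j := Nat.div_le_self j d
            have hbase : u+1+j/d ≤ 2*r := by omega
            refine Nat.mul_le_mul (Nat.mul_le_mul ?_ ?_) ?_
            · omega
            · exact Nat.pow_le_pow_right (by omega) hmj
            · exact le_trans (Nat.pow_le_pow_left hbase _)
                (Nat.pow_le_pow_right (by omega) hm2)
        _ = ((j+1) * 2^j * 2^(j-2)) * r^(j-2) := by rw [Nat.mul_pow]; ring
    have habs : |f d| ≤ (convFib (r/d) (j/d) : ℚ) := by
      rw [hf]
      simp only
      rw [abs_mul, abs_mul, abs_pow, abs_neg, abs_one, one_pow, mul_one, Nat.abs_cast]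
      have hmu : |((ArithmeticFunction.moebius d : ℤ) : ℚ)| ≤ 1 := by
        have h := ArithmeticFunction.abs_moebius_le_one (n := d)
        exact_mod_cast h
      calc |((ArithmeticFunction.moebius d : ℤ) : ℚ)| * (convFib (r/d) (j/d) : ℚ)
          ≤ 1 * (convFib (r/d) (j/d) : ℚ) :=
            mul_le_mul_of_nonneg_right hmu (by positivity)
        _ = _ := one_mul _
    calc |f d| ≤ (convFib (r/d) (j/d) : ℚ) := habs
      _ ≤ ((((j+1) * 2^j * 2^(j-2)) * r^(j-2) : ℕ) : ℚ) := by exact_mod_cast hcb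
      _ = M * (r:ℚ)^(j-2) := by rw [hM]; push_cast; ring
  have hsum : |∑ d ∈ D.erase 1, f d| ≤ ((D.erase 1).card : ℚ) * (M * (r:ℚ)^(j-2)) := by
    refine le_trans (Finset.abs_sum_le_sum_abs _ _) ?_
    refine le_trans (Finset.sum_le_card_nsmul _ _ _ hMbound) ?_
    rw [nsmul_eq_mul]
  have hcard : ((D.erase 1).card : ℚ) ≤ (j:ℚ) := by
    have h1 : (D.erase 1).card ≤ D.card := Finset.card_le_card (Finset.erase_subset _ _)
    have h2 : D.card ≤ Nat.gcd r j := by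
      have hsub : D ⊆ Finset.Ico 1 (Nat.gcd r j + 1) := by
        intro x hx
        rw [hD, Nat.mem_divisors] at hx
        rw [Finset.mem_Ico]
        constructor
        · have : 0 < x := Nat.pos_of_mem_divisors (Nat.mem_divisors.mpr hx)
          omega
        · exact Nat.lt_succ_of_le (Nat.le_of_dvd (Nat.pos_of_ne_zero hg) hx.1)
      calc D.card ≤ (Finset.Ico 1 (Nat.gcd r j + 1)).card := Finset.card_le_card hsub
        _ = Nat.gcd r j := by simp
    have h3 : Nat.gcd r j ≤ j := Nat.le_of_dvd (by omega) (Nat.gcd_dvd_right r j)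
    exact_mod_cast le_trans h1 (le_trans h2 h3)
  rw [hsplit, abs_mul, abs_div, abs_pow, abs_neg, abs_one, one_pow, Nat.abs_cast]
  have hstep : |∑ d ∈ D.erase 1, f d| ≤ (j:ℚ) * (M * (r:ℚ)^(j-2)) :=
    le_trans hsum (mul_le_mul_of_nonneg_right hcard (by positivity))
  have hinv : (1:ℚ)/(r:ℚ) ≤ 1 := by rw [div_le_one hrQ0]; exact hrQ
  calc (1:ℚ)/(r:ℚ) * |∑ d ∈ D.erase 1, f d|
      ≤ 1 * ((j:ℚ) * (M * (r:ℚ)^(j-2))) :=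
        mul_le_mul hinv hstep (abs_nonneg _) zero_le_one
    _ = (j:ℚ) * (M * (r:ℚ)^(j-2)) := one_mul _


/-- For fixed `j ≥ 3`, as `r → ∞`, `H_{j+1}^{(r)} - r^{j-1}/j! = O(r^{j-2})`. -/
theorem Hfib_asymptotic (j : ℕ) (hj : 3 ≤ j) :
    (fun r : ℕ => ((Hfib r j : ℚ) : ℝ) - (r : ℝ) ^ (j - 1) / (Nat.factorial j : ℝ))
      =O[atTop] fun r : ℕ => (r : ℝ) ^ (j - 2) := by
  rw [isBigO_iff]
  refine ⟨((j * 2^j * j^j + j.factorial * j * 2^j * 2^(j-1) : ℕ) : ℝ)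
    + (j:ℝ) * (((j+1) * 2^j * 2^(j-2) : ℕ) : ℝ), ?_⟩
  filter_upwards [eventually_ge_atTop (j+1)] with r hr
  have hQ : |Hfib r j - (r:ℚ)^(j-1) / (j.factorial : ℚ)|
      ≤ (((j * 2^j * j^j + j.factorial * j * 2^j * 2^(j-1) : ℕ) : ℚ)
        + (j:ℚ) * (((j+1) * 2^j * 2^(j-2) : ℕ) : ℚ)) * (r:ℚ)^(j-2) := by
    obtain ⟨s, rfl⟩ : ∃ s, r = s + 1 := ⟨r-1, by omega⟩
    have h1 := main_est j s (by omega) (by omega)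
    have h2 := err_est j (s+1) hj (by omega)
    calc |Hfib (s+1) j - ((s+1:ℕ):ℚ)^(j-1)/(j.factorial:ℚ)|
        ≤ |Hfib (s+1) j - (convFib (s+1) j : ℚ)/((s+1:ℕ):ℚ)|
          + |(convFib (s+1) j : ℚ)/((s+1:ℕ):ℚ) - ((s+1:ℕ):ℚ)^(j-1)/(j.factorial:ℚ)| :=
          abs_sub_le _ _ _
      _ ≤ (j:ℚ) * ((((j+1) * 2^j * 2^(j-2) : ℕ) : ℚ) * ((s+1:ℕ):ℚ)^(j-2))
          + ((j * 2^j * j^j + j.factorial * j * 2^j * 2^(j-1) : ℕ) : ℚ) * ((s+1:ℕ):ℚ)^(j-2) :=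
          add_le_add h2 h1
      _ = (((j * 2^j * j^j + j.factorial * j * 2^j * 2^(j-1) : ℕ) : ℚ)
          + (j:ℚ) * (((j+1) * 2^j * 2^(j-2) : ℕ) : ℚ)) * ((s+1:ℕ):ℚ)^(j-2) := by ring
  have hcast : ((Hfib r j : ℚ) : ℝ) - (r:ℝ)^(j-1)/(j.factorial:ℝ)
      = ((Hfib r j - (r:ℚ)^(j-1)/(j.factorial:ℚ) : ℚ) : ℝ) := by push_cast; ring
  rw [Real.norm_eq_abs, Real.norm_eq_abs, hcast, ← Rat.cast_abs]
  have habs2 : |(r:ℝ)^(j-2)| = (((r:ℚ)^(j-2) : ℚ) : ℝ) := by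
    rw [abs_of_nonneg (by positivity)]
    push_cast
    ring
  rw [habs2]
  exact_mod_cast hQ
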